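/- Let (G, B) be a finite-dimensional metric n-Lie algebra over ℂ and I an ideal of G. Then the orthogonal complement of [I, G, ..., G] with respect to B equals the centralizer C_G(I) = {x ∈ G : [x, I, G, ..., G] = 0}. -/

import Mathlib

open scoped BigOperators

section NLiePreamble

variable {n : ℕ} {G : Type*} [AddCommGroup G] [Module ℂ G]

/-- The inner derivation `ad_y z = [y₁, …, y_{n+1}, z]` determined by an
`(n+2)`-ary alternating bracket. -/
def nAd (br : AlternatingMap ℂ G G (Fin (n + 2))) (y : Fin (n + 1) → G) (z : G) : G :=
  br (Fin.snoc y z)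

/-- The generalized Jacobi identity: the bracket makes `G` an `(n+2)`-Lie algebra. -/
def IsNLie (br : AlternatingMap ℂ G G (Fin (n + 2))) : Prop :=
  ∀ (x : Fin (n + 2) → G) (y : Fin (n + 1) → G),
    nAd br y (br x) = ∑ i, br (Function.update x i (nAd br y (x i)))

/-- A submodule `I` is an ideal: `[I, G, …, G] ⊆ I`. -/
def IsIdeal (br : AlternatingMap ℂ G G (Fin (n + 2))) (I : Submodule ℂ G) : Prop :=
  ∀ (y : Fin (n + 1) → G), ∀ x ∈ I, br (Fin.snoc y x) ∈ I

/-- Invariance of a bilinear form under the bracket. -/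
def IsInvariantForm (br : AlternatingMap ℂ G G (Fin (n + 2)))
    (K : LinearMap.BilinForm ℂ G) : Prop :=
  ∀ (x : Fin (n + 1) → G) (y₁ y₂ : G),
    K (br (Fin.snoc x y₁)) y₂ = - K (br (Fin.snoc x y₂)) y₁

/-- A metric on an `n`-Lie algebra: a nondegenerate invariant symmetric bilinear form. -/
def IsMetric (br : AlternatingMap ℂ G G (Fin (n + 2)))
    (B : LinearMap.BilinForm ℂ G) : Prop :=
  B.Nondegenerate ∧ (∀ x y : G, B x y = B y x) ∧ IsInvariantForm br B

/-- The span `[W₁, …, W_{n+2}]` of all brackets with entries in the given subspaces. -/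
def bracketSpan (br : AlternatingMap ℂ G G (Fin (n + 2)))
    (W : Fin (n + 2) → Submodule ℂ G) : Submodule ℂ G :=
  Submodule.span ℂ {z | ∃ w : Fin (n + 2) → G, (∀ i, w i ∈ W i) ∧ z = br w}

/-- The derived algebra `[G, …, G]`. -/
def derivedAlg (br : AlternatingMap ℂ G G (Fin (n + 2))) : Submodule ℂ G :=
  bracketSpan br fun _ => ⊤

/-- `[I, …, I]` for a subspace `I`. -/
def derivedStep (br : AlternatingMap ℂ G G (Fin (n + 2))) (I : Submodule ℂ G) :
    Submodule ℂ G :=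
  bracketSpan br fun _ => I

/-- `[J, H, G, …, G]` for subspaces `J, H`. -/
def pairBracket (br : AlternatingMap ℂ G G (Fin (n + 2))) (J H : Submodule ℂ G) :
    Submodule ℂ G :=
  bracketSpan br (Fin.cons J (Fin.cons H fun _ => (⊤ : Submodule ℂ G)))

/-- `[I, G, …, G]` for a subspace `I`. -/
def idealBracket (br : AlternatingMap ℂ G G (Fin (n + 2))) (I : Submodule ℂ G) :
    Submodule ℂ G :=
  bracketSpan br (Fin.cons I fun _ => (⊤ : Submodule ℂ G))

/-- The centralizer `C_G(I) = {x : [x, I, G, …, G] = 0}` of a subspace `I`. -/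
def centralizer (br : AlternatingMap ℂ G G (Fin (n + 2))) (I : Submodule ℂ G) :
    Submodule ℂ G where
  carrier := {x | ∀ v ∈ I, ∀ y : Fin n → G, br (Fin.cons x (Fin.cons v y)) = 0}
  add_mem' := by
    intro a b ha hb v hv y
    have := br.toMultilinearMap.cons_add (Fin.cons v y) a b
    simp only [AlternatingMap.coe_multilinearMap] at this
    rw [this, ha v hv y, hb v hv y, add_zero]
  zero_mem' := by
    intro v hv y
    have := br.toMultilinearMap.cons_smul (Fin.cons v y) (0 : ℂ) 0
    simpa using (br.toMultilinearMap.map_coord_zero (m := Fin.cons 0 (Fin.cons v y)) 0 rfl)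
  smul_mem' := by
    intro c a ha v hv y
    have := br.toMultilinearMap.cons_smul (Fin.cons v y) c a
    simp only [AlternatingMap.coe_multilinearMap] at this
    rw [this, ha v hv y, smul_zero]

/-- The center `C(G)`. -/
def center (br : AlternatingMap ℂ G G (Fin (n + 2))) : Submodule ℂ G :=
  centralizer br ⊤

/-- Nondegeneracy of `B` restricted to a subspace `W`. -/
def NondegOn (B : LinearMap.BilinForm ℂ G) (W : Submodule ℂ G) : Prop :=
  ∀ x ∈ W, (∀ y ∈ W, B x y = 0) → x = 0

/-- `(G, B)` is `B`-irreducible: no nontrivial nondegenerate ideals. -/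
def BIrreducible (br : AlternatingMap ℂ G G (Fin (n + 2)))
    (B : LinearMap.BilinForm ℂ G) : Prop :=
  ∀ I : Submodule ℂ G, IsIdeal br I → NondegOn B I → I = ⊥ ∨ I = ⊤

/-- `W` is a subalgebra. -/
def IsSubalgebra (br : AlternatingMap ℂ G G (Fin (n + 2))) (W : Submodule ℂ G) : Prop :=
  ∀ x : Fin (n + 2) → G, (∀ i, x i ∈ W) → br x ∈ W

/-- `I` is an ideal of the subalgebra `W`. -/
def IsIdealOf (br : AlternatingMap ℂ G G (Fin (n + 2))) (W I : Submodule ℂ G) : Prop :=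
  I ≤ W ∧ ∀ (y : Fin (n + 1) → G), (∀ i, y i ∈ W) → ∀ x ∈ I, br (Fin.snoc y x) ∈ I

/-- The subalgebra `W` is a simple `n`-Lie algebra. -/
def IsSimpleAlg (br : AlternatingMap ℂ G G (Fin (n + 2))) (W : Submodule ℂ G) : Prop :=
  derivedStep br W ≠ ⊥ ∧ ∀ I : Submodule ℂ G, IsIdealOf br W I → I = ⊥ ∨ I = W

/-- The subalgebra `W` is strong semisimple: a direct sum of simple ideals. -/
def IsStrongSemisimple (br : AlternatingMap ℂ G G (Fin (n + 2)))
    (W : Submodule ℂ G) : Prop :=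
  ∃ (m : ℕ) (S : Fin m → Submodule ℂ G),
    (∀ i, IsIdealOf br W (S i) ∧ IsSimpleAlg br (S i)) ∧
    iSupIndep S ∧ (⨆ i, S i) = W

/-- `I` is solvable (via the derived series). -/
def NLieSolvable (br : AlternatingMap ℂ G G (Fin (n + 2))) (I : Submodule ℂ G) : Prop :=
  ∃ k : ℕ, (derivedStep br)^[k] I = ⊥

/-- `R` is the radical: the maximal solvable ideal. -/
def NLieRadical (br : AlternatingMap ℂ G G (Fin (n + 2))) (R : Submodule ℂ G) : Prop :=
  IsIdeal br R ∧ NLieSolvable br R ∧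
    ∀ I : Submodule ℂ G, IsIdeal br I → NLieSolvable br I → I ≤ R

/-- A Levi decomposition `G = S ⊕ R`. -/
def IsLeviDecomp (br : AlternatingMap ℂ G G (Fin (n + 2)))
    (S R : Submodule ℂ G) : Prop :=
  NLieRadical br R ∧ IsSubalgebra br S ∧ IsStrongSemisimple br S ∧ IsCompl S R

/-- A minimal ideal of `G`. -/
def IsMinimalIdeal (br : AlternatingMap ℂ G G (Fin (n + 2))) (J : Submodule ℂ G) : Prop :=
  IsIdeal br J ∧ J ≠ ⊥ ∧
    ∀ I : Submodule ℂ G, IsIdeal br I → I ≤ J → I = ⊥ ∨ I = J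

/-- The socle: the sum of all minimal ideals. -/
def socle (br : AlternatingMap ℂ G G (Fin (n + 2))) : Submodule ℂ G :=
  sSup {J | IsMinimalIdeal br J}

/-- `H` is an `S`-submodule: `[S, …, S, H] ⊆ H`. -/
def IsSModule (br : AlternatingMap ℂ G G (Fin (n + 2))) (S H : Submodule ℂ G) : Prop :=
  ∀ (y : Fin (n + 1) → G), (∀ i, y i ∈ S) → ∀ x ∈ H, br (Fin.snoc y x) ∈ H

/-- `H` is an irreducible `S`-submodule. -/
def IsIrreducibleSModule (br : AlternatingMap ℂ G G (Fin (n + 2)))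
    (S H : Submodule ℂ G) : Prop :=
  IsSModule br S H ∧ H ≠ ⊥ ∧
    ∀ K : Submodule ℂ G, K ≤ H → IsSModule br S K → K = ⊥ ∨ K = H

/-- The space of invariant symmetric bilinear forms on `G`. -/
def invSymForms (br : AlternatingMap ℂ G G (Fin (n + 2))) :
    Submodule ℂ (LinearMap.BilinForm ℂ G) where
  carrier := {K | (∀ x y : G, K x y = K y x) ∧ IsInvariantForm br K}
  add_mem' := by
    rintro K L ⟨hK1, hK2⟩ ⟨hL1, hL2⟩
    refine ⟨fun x y => by simp [hK1 x y, hL1 x y], fun x y₁ y₂ => ?_⟩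
    simp only [LinearMap.add_apply]
    rw [hK2 x y₁ y₂, hL2 x y₁ y₂]; ring
  zero_mem' := ⟨fun x y => by simp, fun x y₁ y₂ => by simp⟩
  smul_mem' := by
    rintro c K ⟨hK1, hK2⟩
    refine ⟨fun x y => by simp [hK1 x y], fun x y₁ y₂ => ?_⟩
    simp only [LinearMap.smul_apply, smul_eq_mul]
    rw [hK2 x y₁ y₂]; ring

/-- The span of all nondegenerate invariant symmetric bilinear forms (the metric space `B(G)`). -/
def metricSpan (br : AlternatingMap ℂ G G (Fin (n + 2))) :
    Submodule ℂ (LinearMap.BilinForm ℂ G) :=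
  Submodule.span ℂ {K : LinearMap.BilinForm ℂ G | IsMetric br K}

/-- `Γ_B(G)`: `B`-self-adjoint elements of the centroid. -/
def centroidB (br : AlternatingMap ℂ G G (Fin (n + 2)))
    (B : LinearMap.BilinForm ℂ G) : Submodule ℂ (G →ₗ[ℂ] G) where
  carrier := {φ | (∀ (x : Fin (n + 1) → G) (z : G),
      φ (br (Fin.snoc x z)) = br (Fin.snoc x (φ z))) ∧
    ∀ x y : G, B (φ x) y = B x (φ y)}
  add_mem' := by
    rintro φ ψ ⟨hφ1, hφ2⟩ ⟨hψ1, hψ2⟩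
    constructor
    · intro x z
      have hadd := br.toMultilinearMap.snoc_add x (φ z) (ψ z)
      simp only [AlternatingMap.coe_multilinearMap] at hadd
      simp [hφ1 x z, hψ1 x z, hadd]
    · intro x y; simp [hφ2 x y, hψ2 x y]
  zero_mem' := by
    constructor
    · intro x z
      have h0 := br.toMultilinearMap.map_coord_zero (m := Fin.snoc x (0 : G)) (Fin.last _)
        (by simp)
      simp only [AlternatingMap.coe_multilinearMap] at h0
      simp [h0]
    · intro x y; simp
  smul_mem' := by
    rintro c φ ⟨hφ1, hφ2⟩
    constructor
    · intro x z
      have hs := br.toMultilinearMap.snoc_smul x c (φ z)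
      simp only [AlternatingMap.coe_multilinearMap] at hs
      simp [hφ1 x z, hs]
    · intro x y; simp [hφ2 x y]

end NLiePreamble



section AuxProof

set_option linter.unusedSectionVars false

variable {n : ℕ} {G : Type*} [AddCommGroup G] [Module ℂ G]

private lemma aux_snoc_eq_cons_comp (a : Fin (n + 1) → G) (x : G) :
    (Fin.snoc a x : Fin (n + 2) → G) = (Fin.cons x a) ∘ (finRotate (n + 2)) := by
  funext i
  refine Fin.lastCases ?_ ?_ i
  · simp [finRotate_last]
  · intro j
    have h : finRotate (n + 2) (Fin.castSucc j) = Fin.succ j := by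
      rw [finRotate_succ_apply, Fin.coeSucc_eq_succ]
    simp [h]

private lemma aux_snoc_cons_rel (br : AlternatingMap ℂ G G (Fin (n + 2)))
    (a : Fin (n + 1) → G) (x : G) (h : br (Fin.cons x a) = 0) :
    br (Fin.snoc a x) = 0 := by
  have h2 : br (Fin.snoc a x) = Equiv.Perm.sign (finRotate (n + 2)) • br (Fin.cons x a) := by
    rw [aux_snoc_eq_cons_comp]
    exact br.map_perm (Fin.cons x a) (finRotate (n + 2))
  rw [h2, h, smul_zero]

private lemma aux_cons_of_snoc (br : AlternatingMap ℂ G G (Fin (n + 2)))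
    (a : Fin (n + 1) → G) (x : G) (h : br (Fin.snoc a x) = 0) :
    br (Fin.cons x a) = 0 := by
  have h2 : br (Fin.snoc a x) = Equiv.Perm.sign (finRotate (n + 2)) • br (Fin.cons x a) := by
    rw [aux_snoc_eq_cons_comp]
    exact br.map_perm (Fin.cons x a) (finRotate (n + 2))
  rw [h] at h2
  rcases Int.units_eq_one_or (Equiv.Perm.sign (finRotate (n + 2))) with hs | hs <;>
    rw [hs] at h2
  · simpa using h2.symm
  · have := h2.symm
    simp only [Units.smul_def, Units.val_neg, Units.val_one, neg_zsmul, one_zsmul,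
      neg_eq_zero] at this
    exact this

private lemma aux_snoc_zero_apply (a : Fin (n + 1) → G) (u : G) :
    (Fin.snoc a u : Fin (n + 2) → G) 0 = a 0 := by
  have : (0 : Fin (n + 2)) = Fin.castSucc (0 : Fin (n + 1)) := rfl
  rw [this, Fin.snoc_castSucc]

private lemma aux_gen_mem (br : AlternatingMap ℂ G G (Fin (n + 2)))
    (I : Submodule ℂ G) (w : Fin (n + 2) → G) (hw : w 0 ∈ I) :
    br w ∈ idealBracket br I := by
  apply Submodule.subset_span
  refine ⟨w, ?_, rfl⟩
  intro i
  refine Fin.cases ?_ ?_ i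
  · simpa using hw
  · intro j; simp

end AuxProof

variable {n : ℕ} {G : Type*} [AddCommGroup G] [Module ℂ G]

theorem orthogonal_idealBracket_eq_centralizer
    (br : AlternatingMap ℂ G G (Fin (n + 2))) (hLie : IsNLie br)
    [FiniteDimensional ℂ G]
    (B : LinearMap.BilinForm ℂ G) (hB : IsMetric br B)
    (I : Submodule ℂ G) (hI : IsIdeal br I) :
    B.orthogonal (idealBracket br I) = centralizer br I := by
  obtain ⟨hnd, hsym, hinv⟩ := hB
  apply le_antisymm
  · intro x hx
    rw [LinearMap.BilinForm.mem_orthogonal_iff] at hx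
    intro v hv y
    set a : Fin (n + 1) → G := Fin.cons v y with ha
    have key : br (Fin.snoc a x) = 0 := by
      apply hnd.1
      intro u
      have h1 := hinv a x u
      have h2 : br (Fin.snoc a u) ∈ idealBracket br I := by
        apply aux_gen_mem
        rw [aux_snoc_zero_apply]
        simpa [ha] using hv
      have h3 := hx _ h2
      rw [h1, h3, neg_zero]
    exact aux_cons_of_snoc br a x key
  · intro x hx
    rw [LinearMap.BilinForm.mem_orthogonal_iff]
    intro z hz
    induction hz using Submodule.span_induction with
    | mem z hzmem =>
      obtain ⟨w, hw, rfl⟩ := hzmem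
      have hw0 : w 0 ∈ I := by simpa using hw 0
      have hrw : B (br w) x = - B (br (Fin.snoc (Fin.init w) x)) (w (Fin.last _)) := by
        conv_lhs => rw [← Fin.snoc_init_self w]
        exact hinv (Fin.init w) (w (Fin.last _)) x
      have hz2 : br (Fin.snoc (Fin.init w) x) = 0 := by
        apply aux_snoc_cons_rel
        have hi0 : Fin.init w 0 ∈ I := by
          simpa [Fin.init] using hw0
        have := hx (Fin.init w 0) hi0 (Fin.tail (Fin.init w))
        rwa [Fin.cons_self_tail] at this
      rw [hrw, hz2]
      simp
    | zero => simp
    | add z₁ z₂ _ _ ih1 ih2 => simp [ih1, ih2]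
    | smul c z _ ih => simp [ih]
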